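/- In the Euler–Maruyama setting with S = D ⊗ D + Δt (C ⊗ C) q, where q = Σ_k μ_k f_k ⊗ f_k with μ_k ≥ 0 and Σ_k μ_k = Tr(Q) < ∞, one has the bound ‖(C ⊗ C) q‖_{L(V⊗V)} ≤ Tr(Q) ‖C‖²_{L(U;L(V))}, and hence ‖D‖²_{L(V)} + Δt Tr(Q) ‖C‖²_{L(U;L(V))} < 1 implies asymptotic mean-square stability. -/

import Mathlib

open MeasureTheory Filter
open scoped Kronecker RealInnerProductSpace

noncomputable section

/-- A solution process of the linear recursion `X^{j+1} = (D + E^j) X^j` with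
`F_0`-measurable square-integrable initial value (all iterates square-integrable, so that
all tensor expectations exist). -/
def IsSolution {Ω : Type*} {m0 : MeasurableSpace Ω} (μ : MeasureTheory.Measure Ω)
    (ℱ : MeasureTheory.Filtration ℕ m0) {N : ℕ}
    (D : Matrix (Fin N) (Fin N) ℝ) (E : ℕ → Ω → Matrix (Fin N) (Fin N) ℝ)
    (X : ℕ → Ω → Fin N → ℝ) : Prop :=
  (∀ j ω, X (j + 1) ω = (D + E j ω).mulVec (X j ω))
    ∧ (∀ k, StronglyMeasurable[ℱ 0] fun ω => X 0 ω k)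
    ∧ (∀ j k, MeasureTheory.MemLp (fun ω => X j ω k) 2 μ)

/-- The mean-square (second moment) `E[‖X^j‖²]` of a solution process. -/
noncomputable def secondMoment {Ω : Type*} {m0 : MeasurableSpace Ω}
    (μ : MeasureTheory.Measure Ω) {N : ℕ} (X : ℕ → Ω → Fin N → ℝ) (j : ℕ) : ℝ :=
  ∫ ω, ∑ k, (X j ω k) ^ 2 ∂μ

/-- Mean-square stability of the zero solution of the recursion `X^{j+1} = (D + E^j)X^j`. -/
def MeanSquareStable {Ω : Type*} {m0 : MeasurableSpace Ω} (μ : MeasureTheory.Measure Ω)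
    (ℱ : MeasureTheory.Filtration ℕ m0) {N : ℕ}
    (D : Matrix (Fin N) (Fin N) ℝ) (E : ℕ → Ω → Matrix (Fin N) (Fin N) ℝ) : Prop :=
  ∀ ε > (0 : ℝ), ∃ δ > (0 : ℝ), ∀ X : ℕ → Ω → Fin N → ℝ,
    IsSolution μ ℱ D E X → secondMoment μ X 0 < δ → ∀ j, secondMoment μ X j < ε

/-- Asymptotic mean-square stability of the zero solution: mean-square stability together with
the existence of `δ > 0` such that `E[‖X^0‖²] < δ` implies `E[‖X^j‖²] → 0`. -/
def AsympMeanSquareStable {Ω : Type*} {m0 : MeasurableSpace Ω} (μ : MeasureTheory.Measure Ω)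
    (ℱ : MeasureTheory.Filtration ℕ m0) {N : ℕ}
    (D : Matrix (Fin N) (Fin N) ℝ) (E : ℕ → Ω → Matrix (Fin N) (Fin N) ℝ) : Prop :=
  MeanSquareStable μ ℱ D E ∧
    ∃ δ > (0 : ℝ), ∀ X : ℕ → Ω → Fin N → ℝ,
      IsSolution μ ℱ D E X → secondMoment μ X 0 < δ →
        Filter.Tendsto (secondMoment μ X) Filter.atTop (nhds 0)

section Helpers


lemma L1' {N : ℕ} (A : Matrix (Fin N) (Fin N) ℝ) (x : Fin N → ℝ) :
    ∑ p, (A.mulVec x p) ^ 2 ≤ ‖Matrix.toEuclideanCLM (𝕜 := ℝ) A‖ ^ 2 * ∑ q, (x q) ^ 2 := by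
  have h := (Matrix.toEuclideanCLM (𝕜 := ℝ) A).le_opNorm ((WithLp.equiv 2 _).symm x)
  change ‖(WithLp.equiv 2 (Fin N → ℝ)).symm (A.mulVec x)‖ ≤ _ at h
  have hn : ∀ y : Fin N → ℝ, ‖(WithLp.equiv 2 (Fin N → ℝ)).symm y‖ ^ 2 = ∑ q, (y q) ^ 2 := by
    intro y
    rw [EuclideanSpace.norm_eq, Real.sq_sqrt (by positivity)]
    simp [sq_abs]
  have h2 : ‖(WithLp.equiv 2 (Fin N → ℝ)).symm (A.mulVec x)‖ ^ 2 ≤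
      (‖Matrix.toEuclideanCLM (𝕜 := ℝ) A‖ * ‖(WithLp.equiv 2 (Fin N → ℝ)).symm x‖) ^ 2 := by
    apply pow_le_pow_left₀ (norm_nonneg _) h
  rw [hn, mul_pow, hn] at h2
  exact h2

lemma Lentry' {N : ℕ} (A : Matrix (Fin N) (Fin N) ℝ) (i j : Fin N) :
    |A i j| ≤ ‖Matrix.toEuclideanCLM (𝕜 := ℝ) A‖ := by
  have h1 : (A i j) ^ 2 ≤ ∑ p, (A.mulVec (fun q => if q = j then 1 else 0) p) ^ 2 := by
    have : A.mulVec (fun q => if q = j then 1 else 0) i = A i j := by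
      simp [Matrix.mulVec, dotProduct]
    calc (A i j) ^ 2 = (A.mulVec (fun q => if q = j then 1 else 0) i) ^ 2 := by rw [this]
      _ ≤ _ := Finset.single_le_sum (f := fun p => (A.mulVec (fun q => if q = j then 1 else 0) p) ^ 2) (fun p _ => sq_nonneg _) (Finset.mem_univ i)
  have h2 := L1' A (fun q => if q = j then 1 else 0)
  have h3 : ∑ q : Fin N, (if q = j then (1:ℝ) else 0) ^ 2 = 1 := by simp
  rw [h3, mul_one] at h2
  have := h1.trans h2
  have habs : |A i j| ^ 2 ≤ ‖Matrix.toEuclideanCLM (𝕜 := ℝ) A‖ ^ 2 := by rwa [sq_abs]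
  exact abs_le_of_sq_le_sq' habs (norm_nonneg _) |>.2

lemma Lfrob' {N : ℕ} (A : Matrix (Fin N) (Fin N) ℝ) (nA : ℝ)
    (hA : ‖Matrix.toEuclideanCLM (𝕜 := ℝ) A‖ ≤ nA) (x : Fin N × Fin N → ℝ) :
    ∑ p : Fin N × Fin N, (∑ q : Fin N × Fin N, A p.1 q.1 * A p.2 q.2 * x q) ^ 2
      ≤ nA ^ 4 * ∑ q : Fin N × Fin N, (x q) ^ 2 := by
  have hnA0 : 0 ≤ nA := le_trans (norm_nonneg _) hA
  set B : Fin N → Fin N → ℝ := fun q1 p2 => A.mulVec (fun q2 => x (q1, q2)) p2 with hB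
  have hsplit : ∀ p : Fin N × Fin N, ∑ q : Fin N × Fin N, A p.1 q.1 * A p.2 q.2 * x q
      = A.mulVec (fun q1 => B q1 p.2) p.1 := by
    intro p
    rw [Fintype.sum_prod_type]
    simp only [Matrix.mulVec, dotProduct, hB, Finset.mul_sum]
    congr 1; ext q1; congr 1; ext q2; ring
  have hAsq : ∀ y : Fin N → ℝ, ∑ p, (A.mulVec y p) ^ 2 ≤ nA ^ 2 * ∑ q, (y q) ^ 2 := by
    intro y
    refine (L1' A y).trans ?_
    have : ‖Matrix.toEuclideanCLM (𝕜 := ℝ) A‖ ^ 2 ≤ nA ^ 2 :=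
      pow_le_pow_left₀ (norm_nonneg _) hA 2
    exact mul_le_mul_of_nonneg_right this (Finset.sum_nonneg fun q _ => sq_nonneg _)
  calc ∑ p : Fin N × Fin N, (∑ q : Fin N × Fin N, A p.1 q.1 * A p.2 q.2 * x q) ^ 2
      = ∑ p2, ∑ p1, (A.mulVec (fun q1 => B q1 p2) p1) ^ 2 := by
        rw [Fintype.sum_prod_type]; rw [Finset.sum_comm]
        exact Finset.sum_congr rfl fun p2 _ => Finset.sum_congr rfl fun p1 _ => by
          rw [hsplit (p1, p2)]
    _ ≤ ∑ p2, nA ^ 2 * ∑ q1, (B q1 p2) ^ 2 := Finset.sum_le_sum fun p2 _ => hAsq _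
    _ = nA ^ 2 * ∑ q1, ∑ p2, (A.mulVec (fun q2 => x (q1, q2)) p2) ^ 2 := by
        rw [← Finset.mul_sum, Finset.sum_comm]
    _ ≤ nA ^ 2 * ∑ q1, (nA ^ 2 * ∑ q2, (x (q1, q2)) ^ 2) := by
        refine mul_le_mul_of_nonneg_left (Finset.sum_le_sum fun q1 _ => hAsq _) (by positivity)
    _ = nA ^ 4 * ∑ q : Fin N × Fin N, (x q) ^ 2 := by
        rw [Fintype.sum_prod_type, ← Finset.mul_sum]; ring

lemma Lpart1' {N : ℕ} (muQ : ℕ → ℝ) (hmu : ∀ k, 0 ≤ muQ k) (hsum : Summable muQ)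
    (nC : ℝ) (hnC0 : 0 ≤ nC) (A : ℕ → Matrix (Fin N) (Fin N) ℝ)
    (hA : ∀ k, ‖Matrix.toEuclideanCLM (𝕜 := ℝ) (A k)‖ ≤ nC)
    (Kq : Matrix (Fin N × Fin N) (Fin N × Fin N) ℝ)
    (hKq : Kq = Matrix.of (fun p q : Fin N × Fin N =>
      ∑' k, muQ k * (A k p.1 q.1 * A k p.2 q.2))) :
    ‖Matrix.toEuclideanCLM (𝕜 := ℝ) Kq‖ ≤ (∑' k, muQ k) * nC ^ 2 := by
  have htr0 : 0 ≤ ∑' k, muQ k := tsum_nonneg hmu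
  refine ContinuousLinearMap.opNorm_le_bound _ (by positivity) ?_
  intro v
  set x : Fin N × Fin N → ℝ := WithLp.equiv 2 _ v with hx
  have hv : v = (WithLp.equiv 2 (Fin N × Fin N → ℝ)).symm x := rfl
  have hnormsq : ∀ y : Fin N × Fin N → ℝ,
      ‖(WithLp.equiv 2 (Fin N × Fin N → ℝ)).symm y‖ ^ 2 = ∑ q, (y q) ^ 2 := by
    intro y
    rw [EuclideanSpace.norm_eq, Real.sq_sqrt (by positivity)]
    simp [sq_abs]
  -- vector summands
  set g : ℕ → Fin N × Fin N → ℝ :=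
    fun k p => muQ k * ∑ q : Fin N × Fin N, A k p.1 q.1 * A k p.2 q.2 * x q with hg
  set G : ℕ → EuclideanSpace ℝ (Fin N × Fin N) :=
    fun k => (WithLp.equiv 2 (Fin N × Fin N → ℝ)).symm (g k) with hG
  -- norm bound on each G k
  have hGnorm : ∀ k, ‖G k‖ ≤ muQ k * (nC ^ 2 * ‖v‖) := by
    intro k
    have h1 : ‖G k‖ ^ 2 ≤ (muQ k * (nC ^ 2 * ‖v‖)) ^ 2 := by
      rw [hG, hnormsq]
      have : ∑ p, (g k p) ^ 2 = muQ k ^ 2 *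
          ∑ p : Fin N × Fin N, (∑ q : Fin N × Fin N, A k p.1 q.1 * A k p.2 q.2 * x q) ^ 2 := by
        rw [Finset.mul_sum]; exact Finset.sum_congr rfl fun p _ => by rw [hg]; ring
      rw [this]
      have h2 := Lfrob' (A k) nC (hA k) x
      have hvn : ∑ q, (x q) ^ 2 = ‖v‖ ^ 2 := by rw [hv, hnormsq]
      rw [hvn] at h2
      calc muQ k ^ 2 * ∑ p : Fin N × Fin N,
            (∑ q : Fin N × Fin N, A k p.1 q.1 * A k p.2 q.2 * x q) ^ 2
          ≤ muQ k ^ 2 * (nC ^ 4 * ‖v‖ ^ 2) :=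
            mul_le_mul_of_nonneg_left h2 (sq_nonneg _)
        _ = (muQ k * (nC ^ 2 * ‖v‖)) ^ 2 := by ring
    exact (abs_le_of_sq_le_sq' h1 (mul_nonneg (hmu k) (by positivity))).2
  -- summability of pieces
  have hterm_sum : ∀ q : Fin N × Fin N, ∀ p : Fin N × Fin N,
      Summable (fun k => muQ k * (A k p.1 q.1 * A k p.2 q.2) * x q) := by
    intro q p
    refine Summable.of_norm_bounded ((hsum.mul_right (nC ^ 2 * |x q|))) ?_
    intro k
    have h1 := (Lentry' (A k) p.1 q.1).trans (hA k)
    have h2 := (Lentry' (A k) p.2 q.2).trans (hA k)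
    calc ‖muQ k * (A k p.1 q.1 * A k p.2 q.2) * x q‖
        = muQ k * (|A k p.1 q.1| * |A k p.2 q.2|) * |x q| := by
          rw [Real.norm_eq_abs, abs_mul, abs_mul, abs_mul, abs_of_nonneg (hmu k)]
      _ ≤ muQ k * (nC * nC) * |x q| := by
          refine mul_le_mul_of_nonneg_right (mul_le_mul_of_nonneg_left ?_ (hmu k)) (abs_nonneg _)
          exact mul_le_mul h1 h2 (abs_nonneg _) hnC0
      _ = muQ k * (nC ^ 2 * |x q|) := by ring
  -- coordinatewise HasSum
  have hcoord : ∀ p : Fin N × Fin N, HasSum (fun k => g k p) (Kq.mulVec x p) := by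
    intro p
    have hsm : Summable (fun k => g k p) := by
      simp only [hg, Finset.mul_sum]
      refine summable_sum fun q _ => ?_
      have := hterm_sum q p
      refine this.congr fun k => by ring
    refine hsm.hasSum_iff.mpr ?_
    have : Kq.mulVec x p = ∑ q : Fin N × Fin N,
        ∑' k, muQ k * (A k p.1 q.1 * A k p.2 q.2) * x q := by
      simp only [Matrix.mulVec, dotProduct, hKq, Matrix.of_apply]
      exact Finset.sum_congr rfl fun q _ => (tsum_mul_right).symm
    rw [this, ← Summable.tsum_finsetSum (fun q _ => hterm_sum q p)]
    exact tsum_congr fun k => by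
      simp only [hg, Finset.mul_sum]
      exact Finset.sum_congr rfl fun q _ => by ring
  -- HasSum in EuclideanSpace
  have hGsum : HasSum G (Matrix.toEuclideanCLM (𝕜 := ℝ) Kq v) := by
    have hpi : HasSum (fun k => g k) (Kq.mulVec x) := Pi.hasSum.mpr hcoord
    have := hpi.mapL ((PiLp.continuousLinearEquiv 2 ℝ (fun _ : Fin N × Fin N => ℝ)).symm :
      (Fin N × Fin N → ℝ) →L[ℝ] EuclideanSpace ℝ (Fin N × Fin N))
    rw [hv]
    exact this
  have hGsummable : Summable fun k => ‖G k‖ :=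
    Summable.of_nonneg_of_le (fun k => norm_nonneg _) hGnorm (hsum.mul_right _)
  calc ‖Matrix.toEuclideanCLM (𝕜 := ℝ) Kq v‖ = ‖∑' k, G k‖ := by rw [hGsum.tsum_eq]
    _ ≤ ∑' k, ‖G k‖ := norm_tsum_le_tsum_norm hGsummable
    _ ≤ ∑' k, muQ k * (nC ^ 2 * ‖v‖) := hGsummable.tsum_le_tsum hGnorm (hsum.mul_right _)
    _ = (∑' k, muQ k) * nC ^ 2 * ‖v‖ := by rw [tsum_mul_right]; ring

variable {Ω : Type*} {m0 : MeasurableSpace Ω} {μ : Measure Ω}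


lemma mulInt' (a b : Ω → ℝ) (ha : MemLp a 2 μ) (hb : MemLp b 2 μ) :
    Integrable (fun ω => a ω * b ω) μ := by
  refine Integrable.mono ((ha.integrable_sq.add hb.integrable_sq).div_const 2)
    (ha.1.mul hb.1) (Filter.Eventually.of_forall fun ω => ?_)
  simp only [Real.norm_eq_abs, Pi.div_apply, Pi.add_apply]
  rw [abs_div, abs_mul]
  rw [abs_of_nonneg (by positivity : (0:ℝ) ≤ a ω ^ 2 + b ω ^ 2), abs_of_nonneg (by norm_num : (0:ℝ) ≤ (2:ℝ))]
  nlinarith [sq_nonneg (|a ω| - |b ω|), sq_abs (a ω), sq_abs (b ω), abs_nonneg (a ω), abs_nonneg (b ω)]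

/-- Truncation lemma: if `E[Z²|m]` is a.e. constant, `g` is `m`-measurable and `L²`,
then `g² Z²` is integrable. -/
lemma sqInt' [IsProbabilityMeasure μ] {m : MeasurableSpace Ω} (hm : m ≤ m0)
    (g Z : Ω → ℝ) (hgm : StronglyMeasurable[m] g) (hg : MemLp g 2 μ) (hZ : MemLp Z 2 μ)
    (c : ℝ) (hc : μ[(fun ω => Z ω ^ 2)|m] =ᵐ[μ] fun _ => c) :
    Integrable (fun ω => g ω ^ 2 * Z ω ^ 2) μ := by
  haveI : SigmaFinite (μ.trim hm) := by infer_instance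
  have hZ2 : Integrable (fun ω => Z ω ^ 2) μ := hZ.integrable_sq
  set gn : ℕ → Ω → ℝ := fun n ω => min (g ω ^ 2) n with hgn
  have hgn_meas : ∀ n, StronglyMeasurable[m] (gn n) := fun n => (hgm.pow 2).inf stronglyMeasurable_const
  have hgn_nonneg : ∀ n ω, 0 ≤ gn n ω := fun n ω => le_min (sq_nonneg _) (Nat.cast_nonneg n)
  have hgn_int : ∀ n, Integrable (fun ω => gn n ω * Z ω ^ 2) μ := by
    intro n
    refine hZ2.bdd_mul (c := n) ((hgn_meas n).mono hm).aestronglyMeasurable (Filter.Eventually.of_forall fun ω => ?_)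
    rw [Real.norm_eq_abs, abs_of_nonneg (hgn_nonneg n ω)]
    exact min_le_right _ _
  have hgn_le : ∀ n ω, gn n ω ≤ g ω ^ 2 := fun n ω => min_le_left _ _
  -- bound the integral of each truncation
  have key : ∀ n, ∫ ω, gn n ω * Z ω ^ 2 ∂μ ≤ c * ∫ ω, g ω ^ 2 ∂μ := by
    intro n
    have h1 : μ[(fun ω => gn n ω * Z ω ^ 2)|m] =ᵐ[μ] fun ω => gn n ω * (μ[(fun ω => Z ω ^ 2)|m]) ω := by
      have := condExp_mul_of_stronglyMeasurable_left (hgn_meas n) (μ := μ)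
        (f := gn n) (g := fun ω => Z ω ^ 2) (hgn_int n) hZ2
      exact this
    have h2 : μ[(fun ω => gn n ω * Z ω ^ 2)|m] =ᵐ[μ] fun ω => gn n ω * c := by
      have hc' : (fun ω => gn n ω * (μ[(fun ω => Z ω ^ 2)|m]) ω) =ᵐ[μ] fun ω => gn n ω * c := by
        filter_upwards [hc] with ω h2ω
        rw [h2ω]
      exact h1.trans hc'
    have h3 : ∫ ω, gn n ω * Z ω ^ 2 ∂μ = ∫ ω, gn n ω * c ∂μ := by
      rw [← integral_condExp hm (f := fun ω => gn n ω * Z ω ^ 2), integral_congr_ae h2]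
    have hc0 : 0 ≤ c := by
      have h4 : ∫ ω, (μ[(fun ω => Z ω ^ 2)|m]) ω ∂μ = ∫ ω, Z ω ^ 2 ∂μ := integral_condExp hm (f := fun ω => Z ω ^ 2)
      have h5 : ∫ ω, (μ[(fun ω => Z ω ^ 2)|m]) ω ∂μ = c := by
        rw [integral_congr_ae hc, integral_const]; simp
      have h6 : (0:ℝ) ≤ ∫ ω, Z ω ^ 2 ∂μ := integral_nonneg fun ω => sq_nonneg _
      rw [h4] at h5; linarith
    rw [h3]
    have : ∫ ω, gn n ω * c ∂μ = c * ∫ ω, gn n ω ∂μ := by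
      simp_rw [mul_comm]; exact integral_const_mul c _
    rw [this]
    refine mul_le_mul_of_nonneg_left ?_ hc0
    refine integral_mono (Integrable.mono hg.integrable_sq
      (((hgn_meas n).mono hm).aestronglyMeasurable) (Filter.Eventually.of_forall fun ω => ?_))
      hg.integrable_sq (fun ω => hgn_le n ω)
    rw [Real.norm_eq_abs, abs_of_nonneg (hgn_nonneg n ω), Real.norm_eq_abs, abs_of_nonneg (sq_nonneg _)]
    exact hgn_le n ω
  -- monotone convergence
  have hmeas : @AEStronglyMeasurable Ω ℝ _ m0 m0 (fun ω => g ω ^ 2 * Z ω ^ 2) μ :=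
    (((hgm.mono hm).pow 2).aestronglyMeasurable).mul (hZ.1.pow 2)
  refine ⟨hmeas, ?_⟩
  rw [hasFiniteIntegral_iff_norm]
  have hpt : ∀ ω, (⨆ n, ENNReal.ofReal (gn n ω * Z ω ^ 2)) = ENNReal.ofReal (g ω ^ 2 * Z ω ^ 2) := by
    intro ω
    refine le_antisymm (iSup_le fun n => ENNReal.ofReal_le_ofReal
      (mul_le_mul_of_nonneg_right (hgn_le n ω) (sq_nonneg _))) ?_
    refine le_iSup_of_le ⌈g ω ^ 2⌉₊ (le_of_eq ?_)
    congr 1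
    rw [hgn]
    simp only []
    rw [min_eq_left (Nat.le_ceil _)]
  have hlim : ∫⁻ ω, ENNReal.ofReal ‖g ω ^ 2 * Z ω ^ 2‖ ∂μ
      = ⨆ n, ∫⁻ ω, ENNReal.ofReal (gn n ω * Z ω ^ 2) ∂μ := by
    rw [← lintegral_iSup']
    · refine lintegral_congr fun ω => ?_
      rw [Real.norm_eq_abs, abs_of_nonneg (mul_nonneg (sq_nonneg _) (sq_nonneg _)), hpt ω]
    · exact fun n => ENNReal.measurable_ofReal.comp_aemeasurable (hgn_int n).1.aemeasurable
    · refine Filter.Eventually.of_forall fun ω => fun a b hab => ENNReal.ofReal_le_ofReal ?_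
      exact mul_le_mul_of_nonneg_right (min_le_min le_rfl (Nat.cast_le.mpr hab)) (sq_nonneg _)
  rw [hlim]
  refine lt_of_le_of_lt (iSup_le fun n => ?_) (ENNReal.ofReal_lt_top (r := c * ∫ ω, g ω ^ 2 ∂μ))
  rw [← ofReal_integral_eq_lintegral_ofReal (hgn_int n)
    (Filter.Eventually.of_forall fun ω => mul_nonneg (hgn_nonneg n ω) (sq_nonneg _))]
  exact ENNReal.ofReal_le_ofReal (key n)

lemma Lpull' [IsProbabilityMeasure μ] {m : MeasurableSpace Ω} (hm : m ≤ m0) (F H : Ω → ℝ)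
    (hF : StronglyMeasurable[m] F) (hFH : Integrable (fun ω => F ω * H ω) μ)
    (hH : Integrable H μ) (c : ℝ) (hc : μ[H|m] =ᵐ[μ] fun _ => c)
    (hFint : Integrable F μ) :
    ∫ ω, F ω * H ω ∂μ = c * ∫ ω, F ω ∂μ := by
  haveI : SigmaFinite (μ.trim hm) := by infer_instance
  have h1 : μ[(fun ω => F ω * H ω)|m] =ᵐ[μ] fun ω => F ω * (μ[H|m]) ω :=
    condExp_mul_of_stronglyMeasurable_left hF hFH hH
  have h2 : μ[(fun ω => F ω * H ω)|m] =ᵐ[μ] fun ω => F ω * c := by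
    refine h1.trans ?_
    filter_upwards [hc] with ω hω
    rw [hω]
  rw [← integral_condExp hm (f := fun ω => F ω * H ω), integral_congr_ae h2]
  have : ∀ ω, F ω * c = c * F ω := fun ω => mul_comm _ _
  simp_rw [this]
  exact integral_const_mul c F

lemma Lmeas {Ω U : Type*} {m0 : MeasurableSpace Ω}
    [NormedAddCommGroup U] [InnerProductSpace ℝ U]
    (ℱ : Filtration ℕ m0) (N : ℕ)
    (ΔL : ℕ → Ω → U) (hmeasL : ∀ j, StronglyMeasurable[ℱ (j + 1)] (ΔL j))
    (C : U →ₗ[ℝ] Matrix (Fin N) (Fin N) ℝ) (nC : ℝ)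
    (hC : ∀ u : U, ‖Matrix.toEuclideanCLM (𝕜 := ℝ) (C u)‖ ≤ nC * ‖u‖)
    (D : Matrix (Fin N) (Fin N) ℝ)
    (X : ℕ → Ω → Fin N → ℝ)
    (hXrec : ∀ j ω, X (j + 1) ω = (D + C (ΔL j ω)).mulVec (X j ω))
    (hX0 : ∀ k, StronglyMeasurable[ℱ 0] fun ω => X 0 ω k) :
    ∀ j k, StronglyMeasurable[ℱ j] fun ω => X j ω k := by
  have hCe : ∀ (u : U) (p q : Fin N), |C u p q| ≤ nC * ‖u‖ :=
    fun u p q => (Lentry' (C u) p q).trans (hC u)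
  have hCcont : ∀ (j : ℕ) (p q : Fin N),
      StronglyMeasurable[ℱ (j + 1)] fun ω => C (ΔL j ω) p q := by
    intro j p q
    have hφ : Continuous fun u : U => C u p q := by
      let φ := LinearMap.mkContinuous
        (f := ({ toFun := fun u : U => C u p q
                 map_add' := fun a b => by simp [Matrix.add_apply]
                 map_smul' := fun r a => by simp [Matrix.smul_apply] } : U →ₗ[ℝ] ℝ))
        nC (fun u => by simpa using hCe u p q)
      have h2 : (fun u : U => C u p q) = ⇑φ := rfl
      rw [h2]
      exact φ.continuous
    exact hφ.comp_stronglyMeasurable (hmeasL j)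
  intro j
  induction j with
  | zero => exact hX0
  | succ j ih =>
    intro k
    have hfn : (fun ω => X (j + 1) ω k)
        = fun ω => ∑ q, (D k q + C (ΔL j ω) k q) * X j ω q := by
      funext ω
      rw [hXrec j ω]
      rfl
    rw [hfn]
    refine Finset.stronglyMeasurable_fun_sum _ fun q _ => ?_
    exact (stronglyMeasurable_const.add (hCcont j k q)).mul
      ((ih q).mono (ℱ.mono (Nat.le_succ j)))


lemma Lstep' {Ω U : Type*} {m0 : MeasurableSpace Ω} (μ : Measure Ω) [IsProbabilityMeasure μ]
    [NormedAddCommGroup U] [InnerProductSpace ℝ U] [CompleteSpace U]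
    (ℱ : Filtration ℕ m0) (N : ℕ) (Δt : ℝ) (hΔt : 0 < Δt)
    (f : ℕ → U) (hf : Orthonormal ℝ f)
    (muQ : ℕ → ℝ) (hmu : ∀ k, 0 ≤ muQ k) (hsum : Summable muQ)
    (ΔL : ℕ → Ω → U)
    (hL2L : ∀ j, MemLp (ΔL j) 2 μ)
    (hmean : ∀ j (u : U), μ[(fun ω => ⟪ΔL j ω, u⟫) | ℱ j] =ᵐ[μ] 0)
    (hcondcov : ∀ j (u u' : U),
      μ[(fun ω => ⟪ΔL j ω, u⟫ * ⟪ΔL j ω, u'⟫) | ℱ j]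
        =ᵐ[μ] fun _ => ∫ ω, ⟪ΔL j ω, u⟫ * ⟪ΔL j ω, u'⟫ ∂μ)
    (hcov : ∀ j (u u' : U), ∫ ω, ⟪ΔL j ω, u⟫ * ⟪ΔL j ω, u'⟫ ∂μ
      = Δt * ∑' k, muQ k * (⟪f k, u⟫ * ⟪f k, u'⟫))
    (C : U →ₗ[ℝ] Matrix (Fin N) (Fin N) ℝ) (nC : ℝ) (hnC0 : 0 ≤ nC)
    (hC : ∀ u : U, ‖Matrix.toEuclideanCLM (𝕜 := ℝ) (C u)‖ ≤ nC * ‖u‖)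
    (D : Matrix (Fin N) (Fin N) ℝ)
    (X : ℕ → Ω → Fin N → ℝ)
    (hXrec : ∀ j ω, X (j + 1) ω = (D + C (ΔL j ω)).mulVec (X j ω))
    (hXL2 : ∀ j k, MemLp (fun ω => X j ω k) 2 μ)
    (j : ℕ) (hXmeas : ∀ k, StronglyMeasurable[ℱ j] fun ω => X j ω k) :
    ∫ ω, ∑ p, (X (j+1) ω p) ^ 2 ∂μ ≤
      (‖Matrix.toEuclideanCLM (𝕜 := ℝ) D‖ ^ 2 + Δt * (∑' k, muQ k) * nC ^ 2)
        * ∫ ω, ∑ q, (X j ω q) ^ 2 ∂μ := by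
  have hm : ℱ j ≤ m0 := ℱ.le j
  -- Riesz vectors for the entries of C
  have hCe : ∀ (u : U) (p q : Fin N), |C u p q| ≤ nC * ‖u‖ :=
    fun u p q => (Lentry' (C u) p q).trans (hC u)
  set v : Fin N → Fin N → U := fun p q =>
    (InnerProductSpace.toDual ℝ U).symm
      (LinearMap.mkContinuous
        { toFun := fun u => C u p q
          map_add' := fun a b => by simp [Matrix.add_apply]
          map_smul' := fun r a => by simp [Matrix.smul_apply] } nC
        (fun u => by simpa using hCe u p q)) with hvdef
  have hv : ∀ (u : U) (p q : Fin N), ⟪u, v p q⟫ = C u p q := by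
    intro u p q
    rw [real_inner_comm, hvdef]
    exact InnerProductSpace.toDual_symm_apply
  -- notations
  set Y : Fin N → Ω → ℝ := fun q ω => X j ω q with hYdef
  set Z : U → Ω → ℝ := fun u ω => ⟪ΔL j ω, u⟫ with hZdef
  have hZv : ∀ (ω : Ω) (p q : Fin N), C (ΔL j ω) p q = Z (v p q) ω := by
    intro ω p q; rw [hZdef]; exact (hv (ΔL j ω) p q).symm
  have hZL2 : ∀ u : U, MemLp (Z u) 2 μ := by
    intro u
    have : Z u = fun ω => ⟪u, ΔL j ω⟫ := funext fun ω => real_inner_comm _ _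
    rw [this]
    exact (hL2L j).const_inner u
  have hZint : ∀ u : U, Integrable (Z u) μ :=
    fun u => (hZL2 u).integrable (by norm_num)
  set cc : U → U → ℝ := fun u u' => Δt * ∑' k, muQ k * (⟪f k, u⟫ * ⟪f k, u'⟫) with hccdef
  have hcc : ∀ u u' : U, μ[(fun ω => Z u ω * Z u' ω)|ℱ j] =ᵐ[μ] fun _ => cc u u' := by
    intro u u'
    have h := hcondcov j u u'
    rw [hcov j u u'] at h
    exact h
  have hYL2 : ∀ q, MemLp (Y q) 2 μ := fun q => hXL2 j q
  have hYm : ∀ q, StronglyMeasurable[ℱ j] (Y q) := fun q => hXmeas q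
  -- squared integrability
  have hsqZ : ∀ (g : Ω → ℝ), StronglyMeasurable[ℱ j] g → MemLp g 2 μ → ∀ u : U,
      Integrable (fun ω => g ω ^ 2 * Z u ω ^ 2) μ := by
    intro g hgm hg u
    refine sqInt' hm g (Z u) hgm hg (hZL2 u) (cc u u) ?_
    have h := hcc u u
    have : (fun ω => Z u ω ^ 2) = fun ω => Z u ω * Z u ω := funext fun ω => sq (Z u ω)
    rw [this]
    exact h
  -- the drift part
  set A : Fin N → Ω → ℝ := fun p ω => ∑ q, D p q * Y q ω with hAdef
  have hAm : ∀ p, StronglyMeasurable[ℱ j] (A p) := by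
    intro p
    exact Finset.stronglyMeasurable_fun_sum Finset.univ fun q _ => (hYm q).const_mul (D p q)
  have hAL2 : ∀ p, MemLp (A p) 2 μ := by
    intro p
    have hfn : A p = ∑ q : Fin N, fun ω => D p q * Y q ω := by
      ext ω; rw [Finset.sum_apply]
    rw [hfn]
    exact memLp_finsetSum' Finset.univ fun q _ => (hYL2 q).const_mul (D p q)
  -- pointwise expansion
  have hexp : ∀ ω, ∑ p, (X (j+1) ω p) ^ 2 =
      (∑ p, (A p ω) ^ 2)
      + ((∑ p, ∑ q, 2 * (A p ω * Y q ω * Z (v p q) ω))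
        + (∑ p, ∑ q, ∑ q', Y q ω * Y q' ω * (Z (v p q) ω * Z (v p q') ω))) := by
    intro ω
    have hXp : ∀ p, X (j+1) ω p = A p ω + ∑ q, Z (v p q) ω * Y q ω := by
      intro p
      rw [hXrec j ω]
      simp only [Matrix.mulVec, dotProduct, Matrix.add_apply, hAdef]
      rw [← Finset.sum_add_distrib]
      refine Finset.sum_congr rfl fun q _ => ?_
      rw [hZv ω p q, hYdef]
      ring
    rw [← Finset.sum_add_distrib, ← Finset.sum_add_distrib]
    refine Finset.sum_congr rfl fun p _ => ?_
    have h1 : 2 * A p ω * (∑ q, Z (v p q) ω * Y q ω)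
        = ∑ q, 2 * (A p ω * Y q ω * Z (v p q) ω) := by
      rw [Finset.mul_sum]
      exact Finset.sum_congr rfl fun q _ => by ring
    have h2 : (∑ q, Z (v p q) ω * Y q ω) ^ 2
        = ∑ q, ∑ q', Y q ω * Y q' ω * (Z (v p q) ω * Z (v p q') ω) := by
      rw [sq, Finset.sum_mul_sum]
      exact Finset.sum_congr rfl fun q _ => Finset.sum_congr rfl fun q' _ => by ring
    rw [hXp p, add_sq, h1, h2, add_assoc]
  -- integrability of the pieces
  have IA2 : ∀ p, Integrable (fun ω => A p ω ^ 2) μ := fun p => (hAL2 p).integrable_sq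
  have IY2 : ∀ q, Integrable (fun ω => Y q ω ^ 2) μ := fun q => (hYL2 q).integrable_sq
  have IYY : ∀ q q', Integrable (fun ω => Y q ω * Y q' ω) μ :=
    fun q q' => mulInt' _ _ (hYL2 q) (hYL2 q')
  have IcrossBase : ∀ p q, Integrable (fun ω => A p ω * Y q ω * Z (v p q) ω) μ := by
    intro p q
    refine Integrable.mono (((hsqZ (A p) (hAm p) (hAL2 p) (v p q)).add (IY2 q)).div_const 2)
      (((((hAm p).mono hm).mul ((hYm q).mono hm)).aestronglyMeasurable).mul (hZL2 (v p q)).1)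
      (Filter.Eventually.of_forall fun ω => ?_)
    simp only [Real.norm_eq_abs, Pi.div_apply, Pi.add_apply]
    have h0 : (0:ℝ) ≤ A p ω ^ 2 * Z (v p q) ω ^ 2 + Y q ω ^ 2 := by positivity
    rw [abs_div, abs_of_nonneg h0, abs_of_nonneg (by norm_num : (0:ℝ) ≤ (2:ℝ))]
    rw [abs_mul, abs_mul]
    nlinarith [sq_nonneg (|A p ω| * |Z (v p q) ω| - |Y q ω|), abs_nonneg (A p ω),
      abs_nonneg (Y q ω), abs_nonneg (Z (v p q) ω), sq_abs (A p ω), sq_abs (Y q ω),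
      sq_abs (Z (v p q) ω)]
  have Icross : ∀ p q, Integrable (fun ω => 2 * (A p ω * Y q ω * Z (v p q) ω)) μ :=
    fun p q => (IcrossBase p q).const_mul 2
  have IcrossVal : ∀ p q, ∫ ω, 2 * (A p ω * Y q ω * Z (v p q) ω) ∂μ = 0 := by
    intro p q
    rw [integral_const_mul]
    have h := Lpull' hm (fun ω => A p ω * Y q ω) (Z (v p q))
      ((hAm p).mul (hYm q)) (IcrossBase p q) (hZint (v p q)) 0 (hmean j (v p q))
      (mulInt' _ _ (hAL2 p) (hYL2 q))
    rw [h, zero_mul, mul_zero]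
  have Iquad : ∀ p q q', Integrable
      (fun ω => Y q ω * Y q' ω * (Z (v p q) ω * Z (v p q') ω)) μ := by
    intro p q q'
    refine Integrable.mono (((hsqZ (Y q) (hYm q) (hYL2 q) (v p q)).add
        (hsqZ (Y q') (hYm q') (hYL2 q') (v p q'))).div_const 2)
      (((((hYm q).mono hm).mul ((hYm q').mono hm)).aestronglyMeasurable).mul
        ((hZL2 (v p q)).1.mul (hZL2 (v p q')).1))
      (Filter.Eventually.of_forall fun ω => ?_)
    simp only [Real.norm_eq_abs, Pi.div_apply, Pi.add_apply]
    have h0 : (0:ℝ) ≤ Y q ω ^ 2 * Z (v p q) ω ^ 2 + Y q' ω ^ 2 * Z (v p q') ω ^ 2 := by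
      positivity
    rw [abs_div, abs_of_nonneg h0, abs_of_nonneg (by norm_num : (0:ℝ) ≤ (2:ℝ))]
    rw [abs_mul, abs_mul, abs_mul]
    nlinarith [sq_nonneg (|Y q ω| * |Z (v p q) ω| - |Y q' ω| * |Z (v p q') ω|),
      abs_nonneg (Y q ω), abs_nonneg (Y q' ω), abs_nonneg (Z (v p q) ω),
      abs_nonneg (Z (v p q') ω), sq_abs (Y q ω), sq_abs (Y q' ω), sq_abs (Z (v p q) ω),
      sq_abs (Z (v p q') ω),
      mul_nonneg (abs_nonneg (Y q ω)) (abs_nonneg (Z (v p q) ω)),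
      mul_nonneg (abs_nonneg (Y q' ω)) (abs_nonneg (Z (v p q') ω))]
  have IquadVal : ∀ p q q', ∫ ω, Y q ω * Y q' ω * (Z (v p q) ω * Z (v p q') ω) ∂μ
      = cc (v p q) (v p q') * ∫ ω, Y q ω * Y q' ω ∂μ := by
    intro p q q'
    exact Lpull' hm (fun ω => Y q ω * Y q' ω) (fun ω => Z (v p q) ω * Z (v p q') ω)
      ((hYm q).mul (hYm q')) (Iquad p q q') (mulInt' _ _ (hZL2 (v p q)) (hZL2 (v p q')))
      (cc (v p q) (v p q')) (hcc (v p q) (v p q')) (IYY q q')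
  -- integrable sums
  have IT1 : Integrable (fun ω => ∑ p, A p ω ^ 2) μ :=
    integrable_finset_sum _ fun p _ => IA2 p
  have IT2 : Integrable (fun ω => ∑ p, ∑ q, 2 * (A p ω * Y q ω * Z (v p q) ω)) μ :=
    integrable_finset_sum _ fun p _ => integrable_finset_sum _ fun q _ => Icross p q
  have IT3 : Integrable (fun ω => ∑ p, ∑ q, ∑ q',
      Y q ω * Y q' ω * (Z (v p q) ω * Z (v p q') ω)) μ :=
    integrable_finset_sum _ fun p _ => integrable_finset_sum _ fun q _ =>
      integrable_finset_sum _ fun q' _ => Iquad p q q'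
  -- decomposition of the integral
  have key : ∫ ω, ∑ p, (X (j+1) ω p) ^ 2 ∂μ
      = (∫ ω, ∑ p, A p ω ^ 2 ∂μ)
        + ((∑ p, ∑ q, ∫ ω, 2 * (A p ω * Y q ω * Z (v p q) ω) ∂μ)
          + (∑ p, ∑ q, ∑ q', ∫ ω, Y q ω * Y q' ω * (Z (v p q) ω * Z (v p q') ω) ∂μ)) := by
    have hfun : (fun ω => ∑ p, (X (j+1) ω p) ^ 2) = fun ω =>
        (∑ p, (A p ω) ^ 2)
        + ((∑ p, ∑ q, 2 * (A p ω * Y q ω * Z (v p q) ω))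
          + (∑ p, ∑ q, ∑ q', Y q ω * Y q' ω * (Z (v p q) ω * Z (v p q') ω))) :=
      funext hexp
    have IT23 : Integrable (fun ω => (∑ p, ∑ q, 2 * (A p ω * Y q ω * Z (v p q) ω))
        + (∑ p, ∑ q, ∑ q', Y q ω * Y q' ω * (Z (v p q) ω * Z (v p q') ω))) μ := IT2.add IT3
    rw [hfun, integral_add IT1 IT23, integral_add IT2 IT3]
    congr 1
    congr 1
    · rw [integral_finset_sum _ fun p _ => integrable_finset_sum _ fun q _ => Icross p q]
      exact Finset.sum_congr rfl fun p _ =>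
        integral_finset_sum _ fun q _ => Icross p q
    · rw [integral_finset_sum _ fun p _ => integrable_finset_sum _ fun q _ =>
        integrable_finset_sum _ fun q' _ => Iquad p q q']
      refine Finset.sum_congr rfl fun p _ => ?_
      rw [integral_finset_sum _ fun q _ => integrable_finset_sum _ fun q' _ => Iquad p q q']
      exact Finset.sum_congr rfl fun q _ =>
        integral_finset_sum _ fun q' _ => Iquad p q q'
  have hT2 : (∑ p, ∑ q : Fin N, ∫ ω, 2 * (A p ω * Y q ω * Z (v p q) ω) ∂μ) = 0 :=
    Finset.sum_eq_zero fun p _ => Finset.sum_eq_zero fun q _ => IcrossVal p q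
  -- the second moment at time j
  set sj : ℝ := ∫ ω, ∑ q, (X j ω q) ^ 2 ∂μ with hsjdef
  have hsj0 : 0 ≤ sj :=
    integral_nonneg fun ω => Finset.sum_nonneg fun q _ => sq_nonneg _
  have IY2sum : Integrable (fun ω => ∑ q, (X j ω q) ^ 2) μ :=
    integrable_finset_sum _ fun q _ => IY2 q
  -- bound on the drift term
  have hT1 : ∫ ω, ∑ p, A p ω ^ 2 ∂μ ≤ ‖Matrix.toEuclideanCLM (𝕜 := ℝ) D‖ ^ 2 * sj := by
    have hpt : ∀ ω, ∑ p, A p ω ^ 2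
        ≤ ‖Matrix.toEuclideanCLM (𝕜 := ℝ) D‖ ^ 2 * ∑ q, (X j ω q) ^ 2 := by
      intro ω
      have : ∀ p, A p ω = D.mulVec (X j ω) p := fun p => rfl
      simp_rw [this]
      exact L1' D (X j ω)
    calc ∫ ω, ∑ p, A p ω ^ 2 ∂μ
        ≤ ∫ ω, ‖Matrix.toEuclideanCLM (𝕜 := ℝ) D‖ ^ 2 * ∑ q, (X j ω q) ^ 2 ∂μ :=
          integral_mono IT1 (IY2sum.const_mul _) hpt
      _ = ‖Matrix.toEuclideanCLM (𝕜 := ℝ) D‖ ^ 2 * sj := integral_const_mul _ _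
  -- the noise coefficient matrices
  have hak : ∀ k, ‖Matrix.toEuclideanCLM (𝕜 := ℝ) (C (f k))‖ ≤ nC := by
    intro k
    have h := hC (f k)
    rwa [hf.1 k, mul_one] at h
  have haE : ∀ k p q, |C (f k) p q| ≤ nC := fun k p q => (Lentry' _ p q).trans (hak k)
  set Iqq : Fin N → Fin N → ℝ := fun q q' => ∫ ω, Y q ω * Y q' ω ∂μ with hIdef
  set t : ℕ → Fin N → Fin N → Fin N → ℝ :=
    fun k p q q' => (muQ k * (C (f k) p q * C (f k) p q')) * Iqq q q' with htdef
  have htsum : ∀ p q q', Summable (fun k => t k p q q') := by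
    intro p q q'
    refine Summable.of_norm_bounded (hsum.mul_right (nC ^ 2 * |Iqq q q'|)) fun k => ?_
    rw [htdef]
    simp only [Real.norm_eq_abs, abs_mul, abs_of_nonneg (hmu k)]
    calc muQ k * (|C (f k) p q| * |C (f k) p q'|) * |Iqq q q'|
        ≤ muQ k * (nC * nC) * |Iqq q q'| := by
          refine mul_le_mul_of_nonneg_right (mul_le_mul_of_nonneg_left ?_ (hmu k)) (abs_nonneg _)
          exact mul_le_mul (haE k p q) (haE k p q') (abs_nonneg _) hnC0
      _ = muQ k * (nC ^ 2 * |Iqq q q'|) := by ring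
  have hccf : ∀ p q q', cc (v p q) (v p q')
      = Δt * ∑' k, muQ k * (C (f k) p q * C (f k) p q') := by
    intro p q q'
    simp only [hccdef]
    congr 1
    exact tsum_congr fun k => by rw [hv (f k) p q, hv (f k) p q']
  have step1 : ∀ p q q', cc (v p q) (v p q') * Iqq q q' = Δt * ∑' k, t k p q q' := by
    intro p q q'
    rw [hccf p q q', mul_assoc, ← tsum_mul_right]
  -- per-k identity
  have hkint : ∀ k, Integrable (fun ω => ∑ p, ((C (f k)).mulVec (X j ω) p) ^ 2) μ := by
    intro k
    have hfn : (fun ω => ∑ p, ((C (f k)).mulVec (X j ω) p) ^ 2)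
        = fun ω => ∑ p, ∑ q, ∑ q', (C (f k) p q * C (f k) p q') * (Y q ω * Y q' ω) := by
      funext ω
      refine Finset.sum_congr rfl fun p _ => ?_
      have : (C (f k)).mulVec (X j ω) p = ∑ q, C (f k) p q * Y q ω := rfl
      rw [this, sq, Finset.sum_mul_sum]
      exact Finset.sum_congr rfl fun q _ => Finset.sum_congr rfl fun q' _ => by ring
    rw [hfn]
    exact integrable_finset_sum _ fun p _ => integrable_finset_sum _ fun q _ =>
      integrable_finset_sum _ fun q' _ => (IYY q q').const_mul _
  have hkid : ∀ k, ∑ p, ∑ q, ∑ q', t k p q q'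
      = muQ k * ∫ ω, ∑ p, ((C (f k)).mulVec (X j ω) p) ^ 2 ∂μ := by
    intro k
    have hfn : (fun ω => ∑ p, ((C (f k)).mulVec (X j ω) p) ^ 2)
        = fun ω => ∑ p, ∑ q, ∑ q', (C (f k) p q * C (f k) p q') * (Y q ω * Y q' ω) := by
      funext ω
      refine Finset.sum_congr rfl fun p _ => ?_
      have : (C (f k)).mulVec (X j ω) p = ∑ q, C (f k) p q * Y q ω := rfl
      rw [this, sq, Finset.sum_mul_sum]
      exact Finset.sum_congr rfl fun q _ => Finset.sum_congr rfl fun q' _ => by ring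
    rw [hfn]
    rw [integral_finset_sum _ fun p _ => integrable_finset_sum _ fun q _ =>
      integrable_finset_sum _ fun q' _ => (IYY q q').const_mul _]
    rw [Finset.mul_sum]
    refine Finset.sum_congr rfl fun p _ => ?_
    rw [integral_finset_sum _ fun q _ =>
      integrable_finset_sum _ fun q' _ => (IYY q q').const_mul _, Finset.mul_sum]
    refine Finset.sum_congr rfl fun q _ => ?_
    rw [integral_finset_sum _ fun q' _ => (IYY q q').const_mul _, Finset.mul_sum]
    refine Finset.sum_congr rfl fun q' _ => ?_
    rw [integral_const_mul, htdef]
    simp only []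
    rw [hIdef]
    ring
  have hknn : ∀ k, 0 ≤ ∑ p, ∑ q, ∑ q', t k p q q' := by
    intro k
    rw [hkid k]
    exact mul_nonneg (hmu k)
      (integral_nonneg fun ω => Finset.sum_nonneg fun p _ => sq_nonneg _)
  have hkle : ∀ k, ∑ p, ∑ q, ∑ q', t k p q q' ≤ muQ k * (nC ^ 2 * sj) := by
    intro k
    rw [hkid k]
    refine mul_le_mul_of_nonneg_left ?_ (hmu k)
    have hpt : ∀ ω, ∑ p, ((C (f k)).mulVec (X j ω) p) ^ 2 ≤ nC ^ 2 * ∑ q, (X j ω q) ^ 2 := by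
      intro ω
      refine (L1' (C (f k)) (X j ω)).trans ?_
      refine mul_le_mul_of_nonneg_right (pow_le_pow_left₀ (norm_nonneg _) (hak k) 2)
        (Finset.sum_nonneg fun q _ => sq_nonneg _)
    calc ∫ ω, ∑ p, ((C (f k)).mulVec (X j ω) p) ^ 2 ∂μ
        ≤ ∫ ω, nC ^ 2 * ∑ q, (X j ω q) ^ 2 ∂μ :=
          integral_mono (hkint k) (IY2sum.const_mul _) hpt
      _ = nC ^ 2 * sj := integral_const_mul _ _
  have hsummk : Summable (fun k => ∑ p, ∑ q, ∑ q', t k p q q') :=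
    Summable.of_nonneg_of_le hknn hkle (hsum.mul_right _)
  -- swap the tsum out of the finite sums
  have hsw : (∑ p, ∑ q, ∑ q', ∑' k, t k p q q') = ∑' k, ∑ p, ∑ q, ∑ q', t k p q q' := by
    have h1 : ∀ p q, (∑ q', ∑' k, t k p q q') = ∑' k, ∑ q', t k p q q' :=
      fun p q => (Summable.tsum_finsetSum (fun q' _ => htsum p q q')).symm
    have h2 : ∀ p, (∑ q, ∑' k, ∑ q', t k p q q') = ∑' k, ∑ q, ∑ q', t k p q q' :=
      fun p => (Summable.tsum_finsetSum (fun q _ => summable_sum fun q' _ => htsum p q q')).symm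
    have h3 : (∑ p, ∑' k, ∑ q, ∑ q', t k p q q') = ∑' k, ∑ p, ∑ q, ∑ q', t k p q q' :=
      (Summable.tsum_finsetSum (fun p _ => summable_sum fun q _ => summable_sum fun q' _ => htsum p q q')).symm
    calc ∑ p, ∑ q, ∑ q', ∑' k, t k p q q'
        = ∑ p, ∑ q, ∑' k, ∑ q', t k p q q' :=
          Finset.sum_congr rfl fun p _ => Finset.sum_congr rfl fun q _ => h1 p q
      _ = ∑ p, ∑' k, ∑ q, ∑ q', t k p q q' := Finset.sum_congr rfl fun p _ => h2 p
      _ = ∑' k, ∑ p, ∑ q, ∑ q', t k p q q' := h3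
  have hT3 : (∑ p, ∑ q, ∑ q', ∫ ω, Y q ω * Y q' ω * (Z (v p q) ω * Z (v p q') ω) ∂μ)
      ≤ Δt * ((∑' k, muQ k) * (nC ^ 2 * sj)) := by
    calc (∑ p, ∑ q, ∑ q', ∫ ω, Y q ω * Y q' ω * (Z (v p q) ω * Z (v p q') ω) ∂μ)
        = ∑ p, ∑ q, ∑ q', cc (v p q) (v p q') * Iqq q q' :=
          Finset.sum_congr rfl fun p _ => Finset.sum_congr rfl fun q _ =>
            Finset.sum_congr rfl fun q' _ => IquadVal p q q'
      _ = ∑ p, ∑ q, ∑ q', Δt * ∑' k, t k p q q' :=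
          Finset.sum_congr rfl fun p _ => Finset.sum_congr rfl fun q _ =>
            Finset.sum_congr rfl fun q' _ => step1 p q q'
      _ = Δt * ∑ p, ∑ q, ∑ q', ∑' k, t k p q q' := by
          simp only [Finset.mul_sum]
      _ = Δt * ∑' k, ∑ p, ∑ q, ∑ q', t k p q q' := by rw [hsw]
      _ ≤ Δt * ((∑' k, muQ k) * (nC ^ 2 * sj)) := by
          refine mul_le_mul_of_nonneg_left ?_ hΔt.le
          refine le_trans (hsummk.tsum_le_tsum hkle (hsum.mul_right _)) ?_
          rw [tsum_mul_right]
  rw [key, hT2, zero_add]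
  calc (∫ ω, ∑ p, A p ω ^ 2 ∂μ)
      + (∑ p, ∑ q, ∑ q', ∫ ω, Y q ω * Y q' ω * (Z (v p q) ω * Z (v p q') ω) ∂μ)
      ≤ ‖Matrix.toEuclideanCLM (𝕜 := ℝ) D‖ ^ 2 * sj + Δt * ((∑' k, muQ k) * (nC ^ 2 * sj)) :=
        add_le_add hT1 hT3
    _ = (‖Matrix.toEuclideanCLM (𝕜 := ℝ) D‖ ^ 2 + Δt * (∑' k, muQ k) * nC ^ 2) * sj := by
        ring

end Helpers

/-- **Corollary 3.3.** In the Euler–Maruyama setting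
`X^{j+1} = (D + C ΔL^j)X^j` with `S = D ⊗ D + Δt (C ⊗ C) q`, where
`q = Σ_k μ_k f_k ⊗ f_k` with `μ_k ≥ 0` and `Σ_k μ_k = Tr(Q) < ∞`, one has the bound
`‖(C ⊗ C) q‖_{L(V⊗V)} ≤ Tr(Q) ‖C‖²_{L(U;L(V))}`, and hence
`‖D‖²_{L(V)} + Δt Tr(Q) ‖C‖²_{L(U;L(V))} < 1` implies asymptotic mean-square stability.
(Here `nC` is the operator norm bound for `C` and operator norms on the tensor space are those
of the induced Euclidean operators.) -/


theorem stmt8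
    {Ω U : Type*} {m0 : MeasurableSpace Ω} (μ : Measure Ω) [IsProbabilityMeasure μ]
    [NormedAddCommGroup U] [InnerProductSpace ℝ U] [CompleteSpace U]
    (ℱ : Filtration ℕ m0) (N : ℕ) (Δt : ℝ) (hΔt : 0 < Δt)
    (f : ℕ → U) (hf : Orthonormal ℝ f)
    (muQ : ℕ → ℝ) (hmu : ∀ k, 0 ≤ muQ k) (hsum : Summable muQ)
    (ΔL : ℕ → Ω → U)
    (hmeasL : ∀ j, StronglyMeasurable[ℱ (j + 1)] (ΔL j))
    (hL2L : ∀ j, MemLp (ΔL j) 2 μ)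
    (hmean : ∀ j (u : U), μ[(fun ω => ⟪ΔL j ω, u⟫) | ℱ j] =ᵐ[μ] 0)
    (hcondcov : ∀ j (u u' : U),
      μ[(fun ω => ⟪ΔL j ω, u⟫ * ⟪ΔL j ω, u'⟫) | ℱ j]
        =ᵐ[μ] fun _ => ∫ ω, ⟪ΔL j ω, u⟫ * ⟪ΔL j ω, u'⟫ ∂μ)
    (hcov : ∀ j (u u' : U), ∫ ω, ⟪ΔL j ω, u⟫ * ⟪ΔL j ω, u'⟫ ∂μ
      = Δt * ∑' k, muQ k * (⟪f k, u⟫ * ⟪f k, u'⟫))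
    (hspan : ∀ j ω, ΔL j ω ∈ (Submodule.span ℝ (Set.range f)).topologicalClosure)
    (C : U →ₗ[ℝ] Matrix (Fin N) (Fin N) ℝ) (nC : ℝ) (hnC0 : 0 ≤ nC)
    (hC : ∀ u : U, ‖Matrix.toEuclideanCLM (𝕜 := ℝ) (C u)‖ ≤ nC * ‖u‖)
    (D : Matrix (Fin N) (Fin N) ℝ)
    (Kq : Matrix (Fin N × Fin N) (Fin N × Fin N) ℝ)
    (hKq : Kq = Matrix.of
      (fun p q : Fin N × Fin N => ∑' k, muQ k * (C (f k) p.1 q.1 * C (f k) p.2 q.2))) :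
    ‖Matrix.toEuclideanCLM (𝕜 := ℝ) Kq‖ ≤ (∑' k, muQ k) * nC ^ 2
      ∧ (‖Matrix.toEuclideanCLM (𝕜 := ℝ) D‖ ^ 2 + Δt * (∑' k, muQ k) * nC ^ 2 < 1 →
          AsympMeanSquareStable μ ℱ D (fun j ω => C (ΔL j ω))) := by
  have hak : ∀ k, ‖Matrix.toEuclideanCLM (𝕜 := ℝ) (C (f k))‖ ≤ nC := by
    intro k
    have h := hC (f k)
    rwa [hf.1 k, mul_one] at h
  constructor
  · exact Lpart1' muQ hmu hsum nC hnC0 (fun k => C (f k)) hak Kq hKq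
  intro hlt
  set r : ℝ := ‖Matrix.toEuclideanCLM (𝕜 := ℝ) D‖ ^ 2 + Δt * (∑' k, muQ k) * nC ^ 2 with hrdef
  have hr0 : 0 ≤ r :=
    add_nonneg (sq_nonneg _)
      (mul_nonneg (mul_nonneg hΔt.le (tsum_nonneg hmu)) (sq_nonneg _))
  -- key estimates for any solution
  have hmain : ∀ X : ℕ → Ω → Fin N → ℝ, IsSolution μ ℱ D (fun j ω => C (ΔL j ω)) X →
      (∀ j, 0 ≤ secondMoment μ X j) ∧
      (∀ j, secondMoment μ X j ≤ r ^ j * secondMoment μ X 0) := by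
    intro X hsol
    obtain ⟨hrec, h0, hL2⟩ := hsol
    have hXmeas : ∀ j k, StronglyMeasurable[ℱ j] fun ω => X j ω k :=
      Lmeas ℱ N ΔL hmeasL C nC hC D X hrec h0
    have hnn : ∀ j, 0 ≤ secondMoment μ X j := fun j =>
      integral_nonneg fun ω => Finset.sum_nonneg fun q _ => sq_nonneg _
    have hstep : ∀ j, secondMoment μ X (j + 1) ≤ r * secondMoment μ X j := by
      intro j
      exact Lstep' μ ℱ N Δt hΔt f hf muQ hmu hsum ΔL hL2L hmean hcondcov hcov
        C nC hnC0 hC D X hrec hL2 j (hXmeas j)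
    refine ⟨hnn, ?_⟩
    intro j
    induction j with
    | zero => simp
    | succ j ih =>
      calc secondMoment μ X (j + 1) ≤ r * secondMoment μ X j := hstep j
        _ ≤ r * (r ^ j * secondMoment μ X 0) := mul_le_mul_of_nonneg_left ih hr0
        _ = r ^ (j + 1) * secondMoment μ X 0 := by ring
  constructor
  · -- mean-square stability
    intro ε hε
    refine ⟨ε, hε, fun X hsol h0 j => ?_⟩
    obtain ⟨hnn, hgeo⟩ := hmain X hsol
    calc secondMoment μ X j ≤ r ^ j * secondMoment μ X 0 := hgeo j
      _ ≤ 1 * secondMoment μ X 0 :=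
        mul_le_mul_of_nonneg_right (pow_le_one₀ hr0 hlt.le) (hnn 0)
      _ = secondMoment μ X 0 := one_mul _
      _ < ε := h0
  · -- convergence to zero
    refine ⟨1, one_pos, fun X hsol _ => ?_⟩
    obtain ⟨hnn, hgeo⟩ := hmain X hsol
    have hto : Tendsto (fun j => r ^ j * secondMoment μ X 0) atTop (nhds 0) := by
      have := (tendsto_pow_atTop_nhds_zero_of_lt_one hr0 hlt).mul_const (secondMoment μ X 0)
      simpa using this
    exact squeeze_zero hnn hgeo hto

end
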